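/- (Corollary) Under the hypotheses of the main theorem, for any positive integer α, if μ < ((πT^α)_{i+1}/(πT^α)_i)·ν for all 1 ≤ i ≤ K−1 (with (πT^α)_i > 0), then π·T^α·(T − I)·Δᵀ > 0, i.e., applying one additional RTL pass after α passes strictly increases expected MRR. -/

import Mathlib

open Matrix

/-- The RTL transition matrix on `Fin K` (position `i : Fin K` corresponds to rank `i+1`). -/
noncomputable def rtlT (K : ℕ) (μ ν : ℝ) : Matrix (Fin K) (Fin K) ℝ :=
  Matrix.of fun i j =>
    if i.val + 1 < K then
      if j.val = i.val + 1 then μ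
      else if 0 < j.val ∧ j.val ≤ i.val then (1 - μ) * (1 - ν) * ν ^ (i.val - j.val)
      else if j.val = 0 then (1 - μ) * ν ^ i.val
      else 0
    else
      if j.val = 0 then ν ^ (K - 1)
      else (1 - ν) * ν ^ (K - 1 - j.val)

/-- The MRR metric vector `Δ_k = 1/k` (rank `k = i+1` for `i : Fin K`). -/
noncomputable def mrr (K : ℕ) : Fin K → ℝ := fun i => 1 / ((i.val : ℝ) + 1)

/-- `Dl n = 1/(n+1)`, the MRR value at 0-indexed position `n`. -/
noncomputable def Dl (n : ℕ) : ℝ := 1 / ((n : ℝ) + 1)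

/-- Expected MRR after the "upward" redistribution from position `n`. -/
noncomputable def Av (ν : ℝ) : ℕ → ℝ
  | 0 => 1
  | n + 1 => ν * Av ν n + (1 - ν) * Dl (n + 1)

lemma Dl_anti (n : ℕ) : Dl (n + 1) < Dl n := by
  unfold Dl
  apply div_lt_div_of_pos_left one_pos (by positivity)
  push_cast; linarith

lemma Av_ge (ν : ℝ) (h0 : 0 ≤ ν) (n : ℕ) : Dl n ≤ Av ν n := by
  induction n with
  | zero => simp [Av, Dl]
  | succ n ih =>
    have hd : Dl (n + 1) ≤ Dl n := (Dl_anti n).le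
    have : Dl (n + 1) = ν * Dl (n + 1) + (1 - ν) * Dl (n + 1) := by ring
    rw [Av, this]
    have h1' : ν * Dl (n + 1) ≤ ν * Av ν n := by
      apply mul_le_mul_of_nonneg_left _ h0
      exact le_trans hd ih
    linarith

lemma Av_key (ν : ℝ) (n : ℕ) :
    Av ν (n + 1) - Dl (n + 1) = ν * ((Av ν n - Dl n) + (Dl n - Dl (n + 1))) := by
  rw [Av]; ring

lemma sumf (ν : ℝ) (n : ℕ) :
    (∑ j ∈ Finset.range (n + 1),
      (if j = 0 then ν ^ n else (1 - ν) * ν ^ (n - j)) * Dl j) = Av ν n := by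
  induction n with
  | zero => simp [Av, Dl]
  | succ n ih =>
    rw [Finset.sum_range_succ]
    have hstep : ∀ j ∈ Finset.range (n + 1),
        (if j = 0 then ν ^ (n + 1) else (1 - ν) * ν ^ (n + 1 - j)) * Dl j
        = ν * ((if j = 0 then ν ^ n else (1 - ν) * ν ^ (n - j)) * Dl j) := by
      intro j hj
      rcases Nat.eq_zero_or_pos j with h | h
      · subst h; simp [pow_succ]; ring
      · have hj' : j ≤ n := Nat.lt_succ_iff.mp (Finset.mem_range.mp hj)
        have : n + 1 - j = (n - j) + 1 := by omega
        simp only [if_neg (Nat.pos_iff_ne_zero.mp h), this, pow_succ]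
        ring
    rw [Finset.sum_congr rfl hstep, ← Finset.mul_sum, ih]
    have : n + 1 ≠ 0 := Nat.succ_ne_zero n
    rw [if_neg this]
    simp [Av]

lemma rowsum (K : ℕ) (μ ν : ℝ) (i : Fin K) :
    ∑ j : Fin K, rtlT K μ ν i j * mrr K j =
      if i.val + 1 < K then μ * Dl (i.val + 1) + (1 - μ) * Av ν i.val
      else Av ν i.val := by
  by_cases hi : i.val + 1 < K
  · rw [if_pos hi]
    set F : ℕ → ℝ := fun n =>
      (if n = i.val + 1 then μ
       else if 0 < n ∧ n ≤ i.val then (1 - μ) * (1 - ν) * ν ^ (i.val - n)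
       else if n = 0 then (1 - μ) * ν ^ i.val
       else 0) * Dl n with hF
    have h1 : ∀ j : Fin K, rtlT K μ ν i j * mrr K j = F j.val := by
      intro j
      simp only [rtlT, Matrix.of_apply, mrr, Dl, hF, if_pos hi]
    have h2 : (∑ j : Fin K, rtlT K μ ν i j * mrr K j) = ∑ n ∈ Finset.range K, F n := by
      rw [← Fin.sum_univ_eq_sum_range]
      exact Finset.sum_congr rfl fun j _ => h1 j
    rw [h2]
    have hsub : Finset.range (i.val + 2) ⊆ Finset.range K :=
      Finset.range_subset_range.mpr (by omega)
    have hvan : ∀ x ∈ Finset.range K, x ∉ Finset.range (i.val + 2) → F x = 0 := by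
      intro x _ hx
      have hx2 : i.val + 2 ≤ x := by simpa [Finset.mem_range, not_lt] using hx
      have c1 : ¬ (x = i.val + 1) := by omega
      have c2 : ¬ (0 < x ∧ x ≤ i.val) := by omega
      have c3 : ¬ (x = 0) := by omega
      simp [hF, c1, c2, c3]
    rw [← Finset.sum_subset hsub hvan, Finset.sum_range_succ]
    have hlast : F (i.val + 1) = μ * Dl (i.val + 1) := by
      simp [hF]
    have hbody : ∀ n ∈ Finset.range (i.val + 1),
        F n = (1 - μ) * ((if n = 0 then ν ^ i.val else (1 - ν) * ν ^ (i.val - n)) * Dl n) := by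
      intro n hn
      have hn' : n ≤ i.val := Nat.lt_succ_iff.mp (Finset.mem_range.mp hn)
      rcases Nat.eq_zero_or_pos n with h | h
      · subst h
        have : ¬ ((0 : ℕ) = i.val + 1) := by omega
        simp [hF, this]
        ring
      · have c1 : ¬ (n = i.val + 1) := by omega
        have c0 : ¬ (n = 0) := by omega
        simp only [hF, if_neg c1, if_pos (And.intro h hn'), if_neg c0]
        ring
    rw [Finset.sum_congr rfl hbody, ← Finset.mul_sum, sumf, hlast]
    ring
  · rw [if_neg hi]
    have hieq : i.val = K - 1 := by omega
    have hK1 : K = (K - 1) + 1 := by omega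
    set G : ℕ → ℝ := fun n =>
      (if n = 0 then ν ^ (K - 1) else (1 - ν) * ν ^ (K - 1 - n)) * Dl n with hG
    have h1 : ∀ j : Fin K, rtlT K μ ν i j * mrr K j = G j.val := by
      intro j
      simp only [rtlT, Matrix.of_apply, mrr, Dl, hG, if_neg hi]
    have h2 : (∑ j : Fin K, rtlT K μ ν i j * mrr K j) = ∑ n ∈ Finset.range K, G n := by
      rw [← Fin.sum_univ_eq_sum_range]
      exact Finset.sum_congr rfl fun j _ => h1 j
    rw [h2, hieq, hK1, sumf]
    congr 1

lemma core (μ ν : ℝ) (hν0 : 0 < ν)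
    (M : ℕ) (hM : 1 ≤ M) (Q : ℕ → ℝ)
    (hc : ∀ n, n < M → μ * Q n < ν * Q (n + 1)) :
    0 < (∑ n ∈ Finset.range M, Q n * (μ * Dl (n + 1) + (1 - μ) * Av ν n - Dl n))
        + Q M * (Av ν M - Dl M) := by
  set e : ℕ → ℝ := fun n => Av ν n - Dl n with he
  have he0 : e 0 = 0 := by simp [he, Av, Dl]
  have hepos : ∀ n, 0 ≤ e n := fun n => sub_nonneg.mpr (Av_ge ν hν0.le n)
  have hterm : ∀ n ∈ Finset.range M,
      (1 - μ) * Q n * e n + (ν * Q (n + 1) * e n - Q (n + 1) * e (n + 1))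
        < Q n * (μ * Dl (n + 1) + (1 - μ) * Av ν n - Dl n) := by
    intro n hn
    have hn' : n < M := Finset.mem_range.mp hn
    have hd : 0 < Dl n - Dl (n + 1) := sub_pos.mpr (Dl_anti n)
    have hk := Av_key ν n
    have hcn := hc n hn'
    have hmain : μ * Q n * (Dl n - Dl (n + 1)) < ν * Q (n + 1) * (Dl n - Dl (n + 1)) :=
      mul_lt_mul_of_pos_right hcn hd
    have hE : e (n + 1) = ν * (e n + (Dl n - Dl (n + 1))) := by rw [he]; exact hk
    rw [hE]
    simp only [he]
    nlinarith [hmain]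
  have hlt := Finset.sum_lt_sum_of_nonempty (Finset.nonempty_range_iff.mpr (by omega)) hterm
  have hshift : (∑ n ∈ Finset.range M, Q (n + 1) * e (n + 1))
      = (∑ n ∈ Finset.range M, Q n * e n) + Q M * e M - Q 0 * e 0 := by
    have h1 := Finset.sum_range_succ' (fun n => Q n * e n) M
    have h2 := Finset.sum_range_succ (fun n => Q n * e n) M
    linarith [h1, h2]
  have hsplit : (∑ n ∈ Finset.range M,
      ((1 - μ) * Q n * e n + (ν * Q (n + 1) * e n - Q (n + 1) * e (n + 1))))
      = (∑ n ∈ Finset.range M, ((1 - μ) * Q n * e n + ν * Q (n + 1) * e n))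
        - ∑ n ∈ Finset.range M, Q (n + 1) * e (n + 1) := by
    rw [← Finset.sum_sub_distrib]
    exact Finset.sum_congr rfl fun n _ => by ring
  have hcomb : (∑ n ∈ Finset.range M, ((1 - μ) * Q n * e n + ν * Q (n + 1) * e n))
      - (∑ n ∈ Finset.range M, Q n * e n)
      = ∑ n ∈ Finset.range M, (ν * Q (n + 1) - μ * Q n) * e n := by
    rw [← Finset.sum_sub_distrib]
    exact Finset.sum_congr rfl fun n _ => by ring
  have hnn : 0 ≤ ∑ n ∈ Finset.range M, (ν * Q (n + 1) - μ * Q n) * e n := by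
    apply Finset.sum_nonneg
    intro n hn
    have := hc n (Finset.mem_range.mp hn)
    exact mul_nonneg (by linarith) (hepos n)
  have hEQ : (∑ n ∈ Finset.range M,
      ((1 - μ) * Q n * e n + (ν * Q (n + 1) * e n - Q (n + 1) * e (n + 1)))) + Q M * e M
      = ∑ n ∈ Finset.range M, (ν * Q (n + 1) - μ * Q n) * e n := by
    rw [hsplit, hshift, he0]
    linarith [hcomb]
  have hfin : 0 ≤ (∑ n ∈ Finset.range M,
      ((1 - μ) * Q n * e n + (ν * Q (n + 1) * e n - Q (n + 1) * e (n + 1)))) + Q M * e M := by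
    rw [hEQ]; exact hnn
  calc (0 : ℝ) ≤ _ := hfin
    _ < _ := by
        have := add_lt_add_right hlt (Q M * e M)
        simpa [he] using this

/-- The key gain inequality for a single additional RTL pass, for any positive vector `q`
satisfying the ratio condition. -/
lemma gain_pos (K : ℕ) (hK : 2 ≤ K) (μ ν : ℝ)
    (hμ : μ ∈ Set.Ioo (0:ℝ) 1) (hν : ν ∈ Set.Ioo (0:ℝ) 1)
    (q : Fin K → ℝ) (hq : ∀ i, 0 < q i)
    (hc : ∀ i : Fin K, (h : i.val + 1 < K) → μ * q i < ν * q ⟨i.val + 1, h⟩) :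
    0 < dotProduct (Matrix.vecMul q (rtlT K μ ν - 1)) (mrr K) := by
  rw [← Matrix.dotProduct_mulVec]
  have hrow : ∀ i : Fin K, ((rtlT K μ ν - 1) *ᵥ mrr K) i
      = (if i.val + 1 < K then μ * Dl (i.val + 1) + (1 - μ) * Av ν i.val
          else Av ν i.val) - Dl i.val := by
    intro i
    have hone : (∑ j : Fin K, (1 : Matrix (Fin K) (Fin K) ℝ) i j * mrr K j) = Dl i.val := by
      simp [Matrix.one_apply, mrr, Dl]
    have : ((rtlT K μ ν - 1) *ᵥ mrr K) i
        = (∑ j : Fin K, rtlT K μ ν i j * mrr K j)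
          - ∑ j : Fin K, (1 : Matrix (Fin K) (Fin K) ℝ) i j * mrr K j := by
      simp only [Matrix.mulVec, dotProduct, Matrix.sub_apply, sub_mul,
        Finset.sum_sub_distrib]
    rw [this, rowsum, hone]
  have hq' : dotProduct q ((rtlT K μ ν - 1) *ᵥ mrr K)
      = ∑ i : Fin K, q i * (((rtlT K μ ν - 1) *ᵥ mrr K) i) := rfl
  rw [hq']
  set Q : ℕ → ℝ := fun n => if h : n < K then q ⟨n, h⟩ else 0 with hQdef
  have hQeq : ∀ i : Fin K, q i = Q i.val := by
    intro i; simp [hQdef, i.isLt]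
  set R : ℕ → ℝ := fun n =>
    (if n + 1 < K then μ * Dl (n + 1) + (1 - μ) * Av ν n else Av ν n) - Dl n with hR
  have hsum : (∑ i : Fin K, q i * (((rtlT K μ ν - 1) *ᵥ mrr K) i))
      = ∑ n ∈ Finset.range K, Q n * R n := by
    rw [← Fin.sum_univ_eq_sum_range (fun n => Q n * R n) K]
    refine Finset.sum_congr rfl fun i _ => ?_
    rw [hrow i, hQeq i]
  rw [hsum]
  set M := K - 1 with hM
  have hKM : K = M + 1 := by omega
  have hM1 : 1 ≤ M := by omega
  rw [hKM, Finset.sum_range_succ]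
  have hbody : ∀ n ∈ Finset.range M,
      Q n * R n = Q n * (μ * Dl (n + 1) + (1 - μ) * Av ν n - Dl n) := by
    intro n hn
    have hn' : n < M := Finset.mem_range.mp hn
    have : n + 1 < K := by omega
    simp only [hR, if_pos this]
  have hlastR : Q M * R M = Q M * (Av ν M - Dl M) := by
    have : ¬ (M + 1 < K) := by omega
    simp only [hR, if_neg this]
  rw [Finset.sum_congr rfl hbody, hlastR]
  apply core μ ν hν.1 M hM1 Q
  intro n hn
  have hnK : n < K := by omega
  have hn1K : n + 1 < K := by omega
  have h1 := hc ⟨n, hnK⟩ hn1K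
  have e1 : Q n = q ⟨n, hnK⟩ := by simp [hQdef, hnK]
  have e2 : Q (n + 1) = q ⟨n + 1, hn1K⟩ := by simp [hQdef, hn1K]
  rw [e1, e2]
  exact h1

/-- Corollary: if after `α` RTL passes the state distribution `πT^α` still satisfies the
ratio condition, then one additional RTL pass strictly increases the expected MRR. -/
theorem rtl_gain_pos_iterated (K : ℕ) (hK : 2 ≤ K) (μ ν : ℝ)
    (hμ : μ ∈ Set.Ioo (0:ℝ) 1) (hν : ν ∈ Set.Ioo (0:ℝ) 1)
    (π : Fin K → ℝ) (hpos : ∀ i, 0 < π i) (hsum : ∑ i, π i = 1)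
    (α : ℕ) (hα : 1 ≤ α)
    (hqpos : ∀ i : Fin K, 0 < Matrix.vecMul π (rtlT K μ ν ^ α) i)
    (hcond : ∀ i : Fin K, (h : i.val + 1 < K) →
      μ < (Matrix.vecMul π (rtlT K μ ν ^ α) ⟨i.val + 1, h⟩ /
            Matrix.vecMul π (rtlT K μ ν ^ α) i) * ν) :
    0 < dotProduct
        (Matrix.vecMul (Matrix.vecMul π (rtlT K μ ν ^ α)) (rtlT K μ ν - 1)) (mrr K) := by
  apply gain_pos K hK μ ν hμ hν _ hqpos
  intro i h
  have h1 := hcond i h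
  have hqi := hqpos i
  set a := Matrix.vecMul π (rtlT K μ ν ^ α) ⟨i.val + 1, h⟩
  set b := Matrix.vecMul π (rtlT K μ ν ^ α) i
  rw [div_mul_eq_mul_div, lt_div_iff₀ hqi] at h1
  calc μ * b < a * ν := h1
    _ = ν * a := by ring
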